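/- Let (Ω,F,P) be a probability space, p ∈ (0,1), γ, T : Ω → ℕ with T ≤ γ pointwise, and define D̄*(ω) = T(ω)/γ(ω) if γ(ω) > 0 and D̄*(ω) = 0 otherwise. Assume E[D̄* | σ(γ)] = p·1{γ > 0} almost surely, and let p_γ := P(γ > 0) with 0 < p_γ < 1. Then for any θ⁰⁰ : ℕ → ℝ with θ⁰⁰(γ) and θ⁰⁰(γ)·D̄* integrable, Cov(θ⁰⁰(γ), D̄*) = ( E[θ⁰⁰(γ) | γ > 0] − E[θ⁰⁰(γ) | γ = 0] ) · p · (1 − p_γ) · p_γ. -/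

import Mathlib

open MeasureTheory ProbabilityTheory

/-- Covariance of the degree-conditional baseline `θ⁰⁰(γ)` with the
imputed fraction `D̄*`:
`Cov(θ⁰⁰(γ), D̄*) = (E[θ⁰⁰(γ) | γ > 0] − E[θ⁰⁰(γ) | γ = 0]) · p · (1 − p_γ) · p_γ`. -/
theorem stmt11
    {Ω : Type*} [MeasurableSpace Ω] (P : Measure Ω) [IsProbabilityMeasure P]
    (p : ℝ) (hp0 : 0 < p) (hp1 : p < 1)
    (γ T : Ω → ℕ) (hγmeas : Measurable γ) (hTmeas : Measurable T)
    (hTγ : ∀ ω, T ω ≤ γ ω)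
    (Dstar : Ω → ℝ)
    (hDstar : ∀ ω, Dstar ω = if 0 < γ ω then (T ω : ℝ) / (γ ω : ℝ) else 0)
    (hcond : P[Dstar | MeasurableSpace.comap γ inferInstance]
      =ᵐ[P] fun ω => if 0 < γ ω then p else 0)
    (hpγ0 : 0 < (P {ω | 0 < γ ω}).toReal) (hpγ1 : (P {ω | 0 < γ ω}).toReal < 1)
    (θ00 : ℕ → ℝ)
    (hθint : Integrable (fun ω => θ00 (γ ω)) P)
    (hθDint : Integrable (fun ω => θ00 (γ ω) * Dstar ω) P) :
    (∫ ω, θ00 (γ ω) * Dstar ω ∂P) - (∫ ω, θ00 (γ ω) ∂P) * (∫ ω, Dstar ω ∂P)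
      = ((P {ω | 0 < γ ω}).toReal⁻¹ * (∫ ω in {ω | 0 < γ ω}, θ00 (γ ω) ∂P)
          - (P {ω | γ ω = 0}).toReal⁻¹ * (∫ ω in {ω | γ ω = 0}, θ00 (γ ω) ∂P))
        * p * (1 - (P {ω | 0 < γ ω}).toReal) * (P {ω | 0 < γ ω}).toReal := by
  set A : Set Ω := {ω | 0 < γ ω} with hAdef
  have hAmeas : MeasurableSet A := hγmeas MeasurableSet.of_discrete
  have hm : MeasurableSpace.comap γ inferInstance ≤ ‹MeasurableSpace Ω› := hγmeas.comap_le
  -- Dstar is measurable and bounded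
  have hDeq : Dstar = fun ω => if 0 < γ ω then (T ω : ℝ) / (γ ω : ℝ) else 0 := funext hDstar
  have hDmeas : Measurable Dstar := by
    rw [hDeq]
    exact Measurable.ite hAmeas
      ((measurable_from_top.comp hTmeas).div (measurable_from_top.comp hγmeas))
      measurable_const
  have hDbound : ∀ ω, ‖Dstar ω‖ ≤ 1 := by
    intro ω
    rw [hDstar ω]
    by_cases h : 0 < γ ω
    · simp only [h, if_true]
      rw [Real.norm_eq_abs, abs_of_nonneg (by positivity)]
      rw [div_le_one (by exact_mod_cast h)]
      exact_mod_cast hTγ ω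
    · simp [h]
  have hDint : Integrable Dstar P :=
    (integrable_const (1 : ℝ)).mono' hDmeas.aestronglyMeasurable (ae_of_all _ hDbound)
  -- θ00 ∘ γ is m-strongly-measurable
  have hθm : StronglyMeasurable[MeasurableSpace.comap γ inferInstance] (fun ω => θ00 (γ ω)) :=
    (measurable_from_top.comp (measurable_iff_comap_le.mpr le_rfl)).stronglyMeasurable
  -- step 1: E[θ·D] = p * ∫_A θ
  have hmul : P[(fun ω => θ00 (γ ω)) * Dstar | MeasurableSpace.comap γ inferInstance]
      =ᵐ[P] (fun ω => θ00 (γ ω)) * P[Dstar | MeasurableSpace.comap γ inferInstance] :=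
    condExp_mul_of_stronglyMeasurable_left hθm hθDint hDint
  have h1 : (∫ ω, θ00 (γ ω) * Dstar ω ∂P) = p * ∫ ω in A, θ00 (γ ω) ∂P := by
    have e1 : (∫ ω, θ00 (γ ω) * Dstar ω ∂P)
        = ∫ ω, (P[(fun ω => θ00 (γ ω)) * Dstar | MeasurableSpace.comap γ inferInstance]) ω ∂P :=
      (integral_condExp hm).symm
    have e2 : (fun ω => θ00 (γ ω)) * P[Dstar | MeasurableSpace.comap γ inferInstance]
        =ᵐ[P] fun ω => θ00 (γ ω) * (if 0 < γ ω then p else 0) := by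
      filter_upwards [hcond] with ω hω
      simp [hω]
    have e3 : (∫ ω, θ00 (γ ω) * (if 0 < γ ω then p else 0) ∂P)
        = p * ∫ ω in A, θ00 (γ ω) ∂P := by
      have : (fun ω => θ00 (γ ω) * (if 0 < γ ω then p else 0))
          = A.indicator (fun ω => θ00 (γ ω) * p) := by
        funext ω
        by_cases h : ω ∈ A
        · rw [Set.indicator_of_mem h, if_pos (show 0 < γ ω from h)]
        · have : ¬ 0 < γ ω := h
          simp [Set.indicator_of_notMem h, this]
      rw [this, integral_indicator hAmeas, integral_mul_const, mul_comm]
    rw [e1, integral_congr_ae (hmul.trans e2), e3]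
  -- step 2: E[D] = p * P(A)
  have h2 : (∫ ω, Dstar ω ∂P) = p * (P A).toReal := by
    have e1 : (∫ ω, Dstar ω ∂P) = ∫ ω, (P[Dstar | MeasurableSpace.comap γ inferInstance]) ω ∂P := (integral_condExp hm).symm
    have e2 : (∫ ω, (if 0 < γ ω then p else 0) ∂P) = p * (P A).toReal := by
      have : (fun ω => if 0 < γ ω then p else 0) = A.indicator (fun _ => p) := by
        funext ω
        by_cases h : ω ∈ A
        · rw [Set.indicator_of_mem h, if_pos (show 0 < γ ω from h)]
        · have : ¬ 0 < γ ω := h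
          simp [Set.indicator_of_notMem h, this]
      rw [this, integral_indicator_const _ hAmeas, smul_eq_mul, mul_comm, measureReal_def]
    rw [e1, integral_congr_ae hcond, e2]
  -- complement facts
  have hcompl : {ω | γ ω = 0} = Aᶜ := by
    ext ω; simp [hAdef, Nat.pos_iff_ne_zero]
  have hPAc : (P Aᶜ).toReal = 1 - (P A).toReal := by
    have := measure_compl hAmeas (measure_ne_top P A)
    rw [this, measure_univ, ENNReal.toReal_sub_of_le (prob_le_one) (by simp)]
    simp
  have hsplit : (∫ ω, θ00 (γ ω) ∂P)
      = (∫ ω in A, θ00 (γ ω) ∂P) + (∫ ω in Aᶜ, θ00 (γ ω) ∂P) :=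
    (integral_add_compl hAmeas hθint).symm
  rw [h1, h2, hcompl, hPAc, hsplit]
  set a := (P A).toReal
  set b := ∫ ω in A, θ00 (γ ω) ∂P
  set c := ∫ ω in Aᶜ, θ00 (γ ω) ∂P
  have ha : a ≠ 0 := ne_of_gt hpγ0
  have ha1 : (1 : ℝ) - a ≠ 0 := by linarith
  field_simp
  ring
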